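/- arXiv:2407.05433 — 2 statements merged into one kernel-verified Lean document; each statement's English description precedes it below -/
import Mathlib

section
/- Let k, p, k′, p′, m be finite index types. Let A : Matrix (k′ ⊕ p′) (k ⊕ p) ℝ have blocks A₁ : Matrix k′ k ℝ, A₂ : Matrix k′ p ℝ, A₃ : Matrix p′ k ℝ, A₄ : Matrix p′ p ℝ; let B : Matrix (k′ ⊕ p′) m ℝ have block rows B₁ : Matrix k′ m ℝ, B₂ : Matrix p′ m ℝ; let c : (k′ ⊕ p′) → ℝ have blocks c₁ : k′ → ℝ, c₂ : p′ → ℝ. Let F : Matrix p k ℝ, e : p → ℝ, F′ : Matrix p′ k′ ℝ, e′ : p′ → ℝ. For y : k → ℝ, y′ : k′ → ℝ, u : m → ℝ, define x := Sum.elim y (-(F.mulVec y) - e) and x′ := Sum.elim y′ (-(F′.mulVec y′) - e′). Then x′ = A.mulVec x + B.mulVec u + c holds if and only if both (i) y′ = (A₁ - A₂*F).mulVec y + B₁.mulVec u + (c₁ - A₂.mulVec e), and (ii) (A₃ - A₄*F + F′*(A₁ - A₂*F)).mulVec y + (B₂ + F′*B₁).mulVec u + (c₂ - A₄.mulVec e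 + F′.mulVec (c₁ - A₂.mulVec e) + e′) = 0. -/
open Matrix

/-- Correctness of the state-elimination step of the constrained LQR reduction:
after eliminating the constrained state components via `x₂ = -F x₁ - e` at
consecutive stages, the original dynamics constraint is equivalent to a reduced
dynamics equation for the kept state components together with a new mixed
state-and-control linear equality constraint. -/
theorem clqr_state_elim_dynamics_equiv
    {k p k' p' m : Type*} [Fintype k] [Fintype p] [Fintype k'] [Fintype p'] [Fintype m]
    (A₁ : Matrix k' k ℝ) (A₂ : Matrix k' p ℝ) (A₃ : Matrix p' k ℝ) (A₄ : Matrix p' p ℝ)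
    (B₁ : Matrix k' m ℝ) (B₂ : Matrix p' m ℝ) (c₁ : k' → ℝ) (c₂ : p' → ℝ)
    (F : Matrix p k ℝ) (e : p → ℝ) (F' : Matrix p' k' ℝ) (e' : p' → ℝ)
    (y : k → ℝ) (y' : k' → ℝ) (u : m → ℝ) :
    Sum.elim y' (-(F'.mulVec y') - e') =
        (Matrix.fromBlocks A₁ A₂ A₃ A₄).mulVec (Sum.elim y (-(F.mulVec y) - e))
          + (Matrix.fromRows B₁ B₂).mulVec u + Sum.elim c₁ c₂ ↔
      (y' = (A₁ - A₂ * F).mulVec y + B₁.mulVec u + (c₁ - A₂.mulVec e)) ∧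
      ((A₃ - A₄ * F + F' * (A₁ - A₂ * F)).mulVec y + (B₂ + F' * B₁).mulVec u
          + (c₂ - A₄.mulVec e + F'.mulVec (c₁ - A₂.mulVec e) + e') = 0) := by
  rw [fromBlocks_mulVec, fromRows_mulVec]
  simp only [Sum.elim_comp_inl, Sum.elim_comp_inr]
  rw [← Sum.elim_add_add, ← Sum.elim_add_add, Sum.elim_eq_iff]
  have h1 : y' = A₁.mulVec y + A₂.mulVec (-(F.mulVec y) - e) + B₁.mulVec u + c₁ ↔
      y' = (A₁ - A₂ * F).mulVec y + B₁.mulVec u + (c₁ - A₂.mulVec e) := by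
    constructor <;> intro h <;> rw [h] <;>
      simp only [sub_mulVec, ← mulVec_mulVec, mulVec_sub, mulVec_add, mulVec_neg] <;> abel
  rw [h1]
  constructor
  · rintro ⟨h, h2⟩
    refine ⟨h, ?_⟩
    rw [h] at h2
    simp only [sub_mulVec, add_mulVec, ← mulVec_mulVec, mulVec_sub, mulVec_add, mulVec_neg] at h2 ⊢
    linear_combination (norm := module) -h2
  · rintro ⟨h, h2⟩
    refine ⟨h, ?_⟩
    rw [h]
    simp only [sub_mulVec, add_mulVec, ← mulVec_mulVec, mulVec_sub, mulVec_add, mulVec_neg] at h2 ⊢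
    linear_combination (norm := module) -h2
end

section
/- Let N : ℕ and let n : Fin (N+1) → ℕ and m : Fin N → ℕ be dimension functions. For each i : Fin N let Q i : Matrix (Fin (n i.castSucc)) (Fin (n i.castSucc)) ℝ, R i : Matrix (Fin (m i)) (Fin (m i)) ℝ, M i : Matrix (Fin (n i.castSucc)) (Fin (m i)) ℝ, q i : Fin (n i.castSucc) → ℝ, r i : Fin (m i) → ℝ, A i : Matrix (Fin (n i.succ)) (Fin (n i.castSucc)) ℝ, B i : Matrix (Fin (n i.succ)) (Fin (m i)) ℝ, c i : Fin (n i.succ) → ℝ, and let Q_N : Matrix (Fin (n (Fin.last N))) (Fin (n (Fin.last N))) ℝ, q_N : Fin (n (Fin.last N)) → ℝ, s₀ : Fin (n 0) → ℝ. Assume for each i that R i is positive definite and that the block matrix fromBlocks (Q i) (M i) (M i)ᵀ (R i) is positive semidefinite, and that Q_N is positive semidefinite. Define the feasible set 𝒮 of pairs (x, u) with x : (i : Fin (N+1)) → Fin (n i) → ℝ and u : (i : Fin N) → Fin (m i) → ℝ satisfying x 0 = s₀ and x i.succ = (A i).mulVec (x i.castSucc) + (B i).mulVec (u i) + c i for all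 i : Fin N, and the objective J(x,u) = ∑_{i} ((1/2)·(x i.castSucc ⬝ᵥ (Q i).mulVec (x i.castSucc)) + (1/2)·(u i ⬝ᵥ (R i).mulVec (u i)) + (x i.castSucc ⬝ᵥ (M i).mulVec (u i)) + q i ⬝ᵥ x i.castSucc + r i ⬝ᵥ u i) + (1/2)·(x (Fin.last N) ⬝ᵥ Q_N.mulVec (x (Fin.last N))) + q_N ⬝ᵥ x (Fin.last N). Then J attains a minimum on 𝒮: there exists (x*, u*) ∈ 𝒮 with J(x*,u*) ≤ J(x,u) for all (x,u) ∈ 𝒮. -/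
open Matrix

/-- The trajectory `(x, u)` is feasible: it satisfies the initial-state
constraint and the dynamics. -/
def LQRFeasible (N : ℕ) (n : Fin (N + 1) → ℕ) (m : Fin N → ℕ)
    (A : ∀ i : Fin N, Matrix (Fin (n i.succ)) (Fin (n i.castSucc)) ℝ)
    (B : ∀ i : Fin N, Matrix (Fin (n i.succ)) (Fin (m i)) ℝ)
    (c : ∀ i : Fin N, Fin (n i.succ) → ℝ)
    (s₀ : Fin (n 0) → ℝ)
    (x : ∀ i : Fin (N + 1), Fin (n i) → ℝ)
    (u : ∀ i : Fin N, Fin (m i) → ℝ) : Prop :=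
  x 0 = s₀ ∧
    ∀ i : Fin N,
      x i.succ = (A i).mulVec (x i.castSucc) + (B i).mulVec (u i) + c i

/-- The LQR objective function. -/
noncomputable def LQRCost (N : ℕ) (n : Fin (N + 1) → ℕ) (m : Fin N → ℕ)
    (Q : ∀ i : Fin N, Matrix (Fin (n i.castSucc)) (Fin (n i.castSucc)) ℝ)
    (R : ∀ i : Fin N, Matrix (Fin (m i)) (Fin (m i)) ℝ)
    (M : ∀ i : Fin N, Matrix (Fin (n i.castSucc)) (Fin (m i)) ℝ)
    (q : ∀ i : Fin N, Fin (n i.castSucc) → ℝ)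
    (r : ∀ i : Fin N, Fin (m i) → ℝ)
    (QN : Matrix (Fin (n (Fin.last N))) (Fin (n (Fin.last N))) ℝ)
    (qN : Fin (n (Fin.last N)) → ℝ)
    (x : ∀ i : Fin (N + 1), Fin (n i) → ℝ)
    (u : ∀ i : Fin N, Fin (m i) → ℝ) : ℝ :=
  (∑ i : Fin N,
      ((1 / 2) * (x i.castSucc ⬝ᵥ (Q i).mulVec (x i.castSucc))
        + (1 / 2) * (u i ⬝ᵥ (R i).mulVec (u i))
        + x i.castSucc ⬝ᵥ (M i).mulVec (u i)
        + q i ⬝ᵥ x i.castSucc + r i ⬝ᵥ u i))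
    + (1 / 2) * (x (Fin.last N) ⬝ᵥ QN.mulVec (x (Fin.last N)))
    + qN ⬝ᵥ x (Fin.last N)

/-! ### Auxiliary material -/

theorem lqr_continuous_dot {α : Type*} [TopologicalSpace α] {k : Type*} [Fintype k]
    {f g : α → k → ℝ} (hf : Continuous f) (hg : Continuous g) :
    Continuous fun a => f a ⬝ᵥ g a := by
  simp only [dotProduct]
  exact continuous_finset_sum _ fun i _ =>
    ((continuous_apply i).comp hf).mul ((continuous_apply i).comp hg)

theorem lqr_continuous_mulVec {α : Type*} [TopologicalSpace α] {k l : Type*} [Fintype l]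
    (M : Matrix k l ℝ) {f : α → l → ℝ} (hf : Continuous f) :
    Continuous fun a => M.mulVec (f a) := by
  apply continuous_pi
  intro j
  exact lqr_continuous_dot continuous_const hf

/-- Quadratic lower bound for continuous positive 2-homogeneous functions. -/
theorem lqr_quad_lower {E : Type*} [NormedAddCommGroup E] [NormedSpace ℝ E] [ProperSpace E]
    {g : E → ℝ} (hg : Continuous g)
    (hhom : ∀ (a : ℝ), 0 ≤ a → ∀ u : E, g (a • u) = a ^ 2 * g u)
    (hpos : ∀ u : E, u ≠ 0 → 0 < g u) :
    ∃ ε > 0, ∀ u : E, ε * ‖u‖ ^ 2 ≤ g u := by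
  have hg0 : g 0 = 0 := by
    have := hhom 0 le_rfl 0
    simpa using this
  by_cases h : ∃ v : E, v ≠ 0
  · obtain ⟨v, hv⟩ := h
    have hsne : (Metric.sphere (0 : E) 1).Nonempty := by
      refine ⟨‖v‖⁻¹ • v, ?_⟩
      simp [norm_smul, norm_ne_zero_iff.mpr hv, inv_mul_cancel₀ (norm_ne_zero_iff.mpr hv)]
    obtain ⟨w, hwS, hw⟩ := (isCompact_sphere (0 : E) 1).exists_isMinOn hsne hg.continuousOn
    have hw1 : ‖w‖ = 1 := by simpa using hwS
    have hwne : w ≠ 0 := by intro h0; rw [h0] at hw1; simp at hw1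
    refine ⟨g w, hpos w hwne, fun u => ?_⟩
    rcases eq_or_ne u 0 with rfl | hu
    · simp [hg0]
    · have hn : ‖u‖ ≠ 0 := norm_ne_zero_iff.mpr hu
      have husph : ‖u‖⁻¹ • u ∈ Metric.sphere (0 : E) 1 := by
        simp [norm_smul, inv_mul_cancel₀ hn]
      have key : g u = ‖u‖ ^ 2 * g (‖u‖⁻¹ • u) := by
        have := hhom ‖u‖ (norm_nonneg u) (‖u‖⁻¹ • u)
        rwa [smul_inv_smul₀ hn] at this
      have hle : g w ≤ g (‖u‖⁻¹ • u) := hw husph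
      calc (g w) * ‖u‖ ^ 2 = ‖u‖ ^ 2 * g w := by ring
        _ ≤ ‖u‖ ^ 2 * g (‖u‖⁻¹ • u) := mul_le_mul_of_nonneg_left hle (sq_nonneg _)
        _ = g u := key.symm
  · push_neg at h
    refine ⟨1, one_pos, fun u => ?_⟩
    rw [h u]
    simp [hg0]

/-- Linear upper bound for continuous 1-homogeneous functions. -/
theorem lqr_lin_upper {E : Type*} [NormedAddCommGroup E] [NormedSpace ℝ E] [ProperSpace E]
    {g : E → ℝ} (hg : Continuous g)
    (hhom : ∀ (a : ℝ), 0 ≤ a → ∀ u : E, g (a • u) = a * g u) :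
    ∃ K : ℝ, ∀ u : E, g u ≤ K * ‖u‖ := by
  have hg0 : g 0 = 0 := by
    have := hhom 0 le_rfl 0
    simpa using this
  by_cases h : ∃ v : E, v ≠ 0
  · obtain ⟨v, hv⟩ := h
    have hsne : (Metric.sphere (0 : E) 1).Nonempty := by
      refine ⟨‖v‖⁻¹ • v, ?_⟩
      simp [norm_smul, inv_mul_cancel₀ (norm_ne_zero_iff.mpr hv)]
    obtain ⟨w, hwS, hw⟩ := (isCompact_sphere (0 : E) 1).exists_isMaxOn hsne hg.continuousOn
    refine ⟨g w, fun u => ?_⟩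
    rcases eq_or_ne u 0 with rfl | hu
    · simp [hg0]
    · have hn : ‖u‖ ≠ 0 := norm_ne_zero_iff.mpr hu
      have husph : ‖u‖⁻¹ • u ∈ Metric.sphere (0 : E) 1 := by
        simp [norm_smul, inv_mul_cancel₀ hn]
      have key : g u = ‖u‖ * g (‖u‖⁻¹ • u) := by
        have := hhom ‖u‖ (norm_nonneg u) (‖u‖⁻¹ • u)
        rwa [smul_inv_smul₀ hn] at this
      rw [key, mul_comm ‖u‖]
      exact mul_le_mul_of_nonneg_right (hw husph) (norm_nonneg u)
  · push_neg at h
    refine ⟨0, fun u => ?_⟩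
    rw [h u]
    simp [hg0]

theorem lqr_stage_nonneg {k l : ℕ} {Q' : Matrix (Fin k) (Fin k) ℝ}
    {R' : Matrix (Fin l) (Fin l) ℝ} {M' : Matrix (Fin k) (Fin l) ℝ}
    (h : (Matrix.fromBlocks Q' M' M'ᵀ R').PosSemidef) (x : Fin k → ℝ) (v : Fin l → ℝ) :
    0 ≤ 1 / 2 * (x ⬝ᵥ Q'.mulVec x) + 1 / 2 * (v ⬝ᵥ R'.mulVec v) + x ⬝ᵥ M'.mulVec v := by
  have h2 := h.dotProduct_mulVec_nonneg (Sum.elim x v)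
  rw [star_trivial] at h2
  have e : Sum.elim x v ⬝ᵥ (Matrix.fromBlocks Q' M' M'ᵀ R').mulVec (Sum.elim x v)
      = x ⬝ᵥ Q'.mulVec x + v ⬝ᵥ R'.mulVec v + 2 * (x ⬝ᵥ M'.mulVec v) := by
    rw [Matrix.fromBlocks_mulVec]
    simp only [Sum.elim_comp_inl, Sum.elim_comp_inr, sumElim_dotProduct_sumElim,
      dotProduct_add]
    have hsw : v ⬝ᵥ M'ᵀ.mulVec x = x ⬝ᵥ M'.mulVec v := by
      rw [Matrix.dotProduct_mulVec, Matrix.vecMul_transpose, dotProduct_comm]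
    rw [hsw]; ring
  rw [e] at h2
  linarith

section LQRAux
variable {N : ℕ} {n : Fin (N + 1) → ℕ} {m : Fin N → ℕ}
variable (A : ∀ i : Fin N, Matrix (Fin (n i.succ)) (Fin (n i.castSucc)) ℝ)
    (B : ∀ i : Fin N, Matrix (Fin (n i.succ)) (Fin (m i)) ℝ)
    (c : ∀ i : Fin N, Fin (n i.succ) → ℝ)
    (s₀ : Fin (n 0) → ℝ)

/-- The trajectory determined by the controls `u`. -/
def lqrTraj (u : ∀ i : Fin N, Fin (m i) → ℝ) : ∀ i : Fin (N + 1), Fin (n i) → ℝ :=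
  Fin.induction s₀ (fun i xi => (A i).mulVec xi + (B i).mulVec (u i) + c i)

@[simp] theorem lqrTraj_zero (u : ∀ i : Fin N, Fin (m i) → ℝ) :
    lqrTraj A B c s₀ u 0 = s₀ := rfl

theorem lqrTraj_succ (u : ∀ i : Fin N, Fin (m i) → ℝ) (i : Fin N) :
    lqrTraj A B c s₀ u i.succ =
      (A i).mulVec (lqrTraj A B c s₀ u i.castSucc) + (B i).mulVec (u i) + c i :=
  Fin.induction_succ _ _ i

theorem lqrFeasible_iff (x : ∀ i : Fin (N + 1), Fin (n i) → ℝ)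
    (u : ∀ i : Fin N, Fin (m i) → ℝ) :
    LQRFeasible N n m A B c s₀ x u ↔ x = lqrTraj A B c s₀ u := by
  constructor
  · rintro ⟨h0, hd⟩
    funext i
    induction i using Fin.induction with
    | zero => simpa using h0
    | succ i ih => rw [hd i, ih, lqrTraj_succ]
  · rintro rfl
    exact ⟨rfl, fun i => lqrTraj_succ A B c s₀ u i⟩

theorem lqrTraj_decomp (u : ∀ i : Fin N, Fin (m i) → ℝ) (i : Fin (N + 1)) :
    lqrTraj A B c s₀ u i = lqrTraj A B 0 0 u i + lqrTraj A B c s₀ 0 i := by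
  induction i using Fin.induction with
  | zero => simp
  | succ i ih => simp [lqrTraj_succ, ih, Matrix.mulVec_add, Matrix.mulVec_zero]; abel

theorem lqrTraj_hom_smul (u : ∀ i : Fin N, Fin (m i) → ℝ) (a : ℝ) (i : Fin (N + 1)) :
    lqrTraj A B 0 0 (a • u) i = a • lqrTraj A B 0 0 u i := by
  induction i using Fin.induction with
  | zero => simp
  | succ i ih => simp [lqrTraj_succ, ih, Matrix.mulVec_smul, smul_add]

theorem lqrTraj_continuous (i : Fin (N + 1)) :
    Continuous fun u : ∀ i : Fin N, Fin (m i) → ℝ => lqrTraj A B c s₀ u i := by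
  induction i using Fin.induction with
  | zero => exact continuous_const
  | succ i ih =>
    simp only [lqrTraj_succ]
    exact ((lqr_continuous_mulVec _ ih).add
      (lqr_continuous_mulVec _ (continuous_apply i))).add continuous_const

end LQRAux

section LQRAux2
variable {N : ℕ} {n : Fin (N + 1) → ℕ} {m : Fin N → ℕ}
variable (Q : ∀ i : Fin N, Matrix (Fin (n i.castSucc)) (Fin (n i.castSucc)) ℝ)
    (R : ∀ i : Fin N, Matrix (Fin (m i)) (Fin (m i)) ℝ)
    (M : ∀ i : Fin N, Matrix (Fin (n i.castSucc)) (Fin (m i)) ℝ)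
    (q : ∀ i : Fin N, Fin (n i.castSucc) → ℝ)
    (r : ∀ i : Fin N, Fin (m i) → ℝ)
    (A : ∀ i : Fin N, Matrix (Fin (n i.succ)) (Fin (n i.castSucc)) ℝ)
    (B : ∀ i : Fin N, Matrix (Fin (n i.succ)) (Fin (m i)) ℝ)
    (c : ∀ i : Fin N, Fin (n i.succ) → ℝ)
    (QN : Matrix (Fin (n (Fin.last N))) (Fin (n (Fin.last N))) ℝ)
    (qN : Fin (n (Fin.last N)) → ℝ)
    (s₀ : Fin (n 0) → ℝ)

/-- The purely quadratic part of the cost. -/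
noncomputable def lqrQuad (z : ∀ i : Fin (N + 1), Fin (n i) → ℝ)
    (u : ∀ i : Fin N, Fin (m i) → ℝ) : ℝ :=
  (∑ i : Fin N,
      ((1 / 2) * (z i.castSucc ⬝ᵥ (Q i).mulVec (z i.castSucc))
        + (1 / 2) * (u i ⬝ᵥ (R i).mulVec (u i))
        + z i.castSucc ⬝ᵥ (M i).mulVec (u i)))
    + (1 / 2) * (z (Fin.last N) ⬝ᵥ QN.mulVec (z (Fin.last N)))

/-- The cross (linear) part of the cost. -/
noncomputable def lqrCross (z t : ∀ i : Fin (N + 1), Fin (n i) → ℝ)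
    (u : ∀ i : Fin N, Fin (m i) → ℝ) : ℝ :=
  (∑ i : Fin N,
      ((1 / 2) * (z i.castSucc ⬝ᵥ (Q i).mulVec (t i.castSucc))
        + (1 / 2) * (t i.castSucc ⬝ᵥ (Q i).mulVec (z i.castSucc))
        + t i.castSucc ⬝ᵥ (M i).mulVec (u i)
        + q i ⬝ᵥ z i.castSucc + r i ⬝ᵥ u i))
    + (1 / 2) * (z (Fin.last N) ⬝ᵥ QN.mulVec (t (Fin.last N)))
    + (1 / 2) * (t (Fin.last N) ⬝ᵥ QN.mulVec (z (Fin.last N)))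
    + qN ⬝ᵥ z (Fin.last N)

theorem lqrCost_expand (x z t : ∀ i : Fin (N + 1), Fin (n i) → ℝ)
    (u : ∀ i : Fin N, Fin (m i) → ℝ) (hx : ∀ i, x i = z i + t i) :
    LQRCost N n m Q R M q r QN qN x u =
      lqrQuad Q R M QN z u + lqrCross Q M q r QN qN z t u
        + LQRCost N n m Q R M q r QN qN t 0 := by
  unfold LQRCost lqrQuad lqrCross
  simp only [hx, Matrix.mulVec_add, dotProduct_add, add_dotProduct,
    Matrix.mulVec_zero, dotProduct_zero, zero_dotProduct, Pi.zero_apply,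
    mul_add, add_zero, mul_zero, Finset.sum_add_distrib]
  ring

/-- The objective as a function of the controls. -/
noncomputable def lqrF (u : ∀ i : Fin N, Fin (m i) → ℝ) : ℝ :=
  LQRCost N n m Q R M q r QN qN (lqrTraj A B c s₀ u) u

/-- The quadratic part of the objective as a function of the controls. -/
noncomputable def lqrPhi (u : ∀ i : Fin N, Fin (m i) → ℝ) : ℝ :=
  lqrQuad Q R M QN (lqrTraj A B 0 0 u) u

/-- The linear part of the objective as a function of the controls. -/
noncomputable def lqrLam (u : ∀ i : Fin N, Fin (m i) → ℝ) : ℝ :=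
  lqrCross Q M q r QN qN (lqrTraj A B 0 0 u) (lqrTraj A B c s₀ 0) u

theorem lqrF_decomp (u : ∀ i : Fin N, Fin (m i) → ℝ) :
    lqrF Q R M q r A B c QN qN s₀ u =
      lqrPhi Q R M A B QN u + lqrLam Q M q r A B c QN qN s₀ u
        + lqrF Q R M q r A B c QN qN s₀ 0 := by
  have h0 : lqrF Q R M q r A B c QN qN s₀ 0
      = LQRCost N n m Q R M q r QN qN (lqrTraj A B c s₀ 0) 0 := rfl
  rw [h0]
  exact lqrCost_expand Q R M q r QN qN _ _ _ u (lqrTraj_decomp A B c s₀ u)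

theorem lqrPhi_hom (a : ℝ) (_ : 0 ≤ a) (u : ∀ i : Fin N, Fin (m i) → ℝ) :
    lqrPhi Q R M A B QN (a • u) = a ^ 2 * lqrPhi Q R M A B QN u := by
  unfold lqrPhi lqrQuad
  simp only [lqrTraj_hom_smul, Pi.smul_apply, Matrix.mulVec_smul, smul_dotProduct,
    dotProduct_smul, smul_eq_mul, mul_add, Finset.mul_sum]
  congr 1
  · exact Finset.sum_congr rfl fun i _ => by ring
  · ring

theorem lqrLam_hom (a : ℝ) (_ : 0 ≤ a) (u : ∀ i : Fin N, Fin (m i) → ℝ) :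
    lqrLam Q M q r A B c QN qN s₀ (a • u) = a * lqrLam Q M q r A B c QN qN s₀ u := by
  unfold lqrLam lqrCross
  simp only [lqrTraj_hom_smul, Pi.smul_apply, Matrix.mulVec_smul, smul_dotProduct,
    dotProduct_smul, smul_eq_mul, mul_add, Finset.mul_sum]
  rw [Finset.sum_congr rfl (fun (i : Fin N) _ => by ring :
    ∀ i ∈ Finset.univ,
      (1 / 2 * (a * (lqrTraj A B 0 0 u i.castSucc ⬝ᵥ (Q i).mulVec (lqrTraj A B c s₀ 0 i.castSucc)))
        + 1 / 2 * (a * (lqrTraj A B c s₀ 0 i.castSucc ⬝ᵥ (Q i).mulVec (lqrTraj A B 0 0 u i.castSucc)))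
        + a * (lqrTraj A B c s₀ 0 i.castSucc ⬝ᵥ (M i).mulVec (u i))
        + a * (q i ⬝ᵥ lqrTraj A B 0 0 u i.castSucc) + a * (r i ⬝ᵥ u i)) =
      a * (1 / 2 * (lqrTraj A B 0 0 u i.castSucc ⬝ᵥ (Q i).mulVec (lqrTraj A B c s₀ 0 i.castSucc))
        + 1 / 2 * (lqrTraj A B c s₀ 0 i.castSucc ⬝ᵥ (Q i).mulVec (lqrTraj A B 0 0 u i.castSucc))
        + lqrTraj A B c s₀ 0 i.castSucc ⬝ᵥ (M i).mulVec (u i)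
        + q i ⬝ᵥ lqrTraj A B 0 0 u i.castSucc + r i ⬝ᵥ u i))]
  ring_nf

theorem lqrF_continuous :
    Continuous (lqrF Q R M q r A B c QN qN s₀ (N := N) (n := n) (m := m)) := by
  unfold lqrF LQRCost
  have ht : ∀ i, Continuous fun u : ∀ i : Fin N, Fin (m i) → ℝ => lqrTraj A B c s₀ u i :=
    lqrTraj_continuous A B c s₀
  refine ((continuous_finset_sum _ fun i _ => ?_).add ?_).add ?_
  · exact ((((continuous_const.mul (lqr_continuous_dot (ht _)
        (lqr_continuous_mulVec _ (ht _)))).add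
      (continuous_const.mul (lqr_continuous_dot (continuous_apply i)
        (lqr_continuous_mulVec _ (continuous_apply i))))).add
      (lqr_continuous_dot (ht _) (lqr_continuous_mulVec _ (continuous_apply i)))).add
      (lqr_continuous_dot continuous_const (ht _))).add
      (lqr_continuous_dot continuous_const (continuous_apply i))
  · exact continuous_const.mul (lqr_continuous_dot (ht _) (lqr_continuous_mulVec _ (ht _)))
  · exact lqr_continuous_dot continuous_const (ht _)

theorem lqrPhi_continuous :
    Continuous (lqrPhi Q R M A B QN (N := N) (n := n) (m := m)) := by
  unfold lqrPhi lqrQuad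
  have ht : ∀ i, Continuous fun u : ∀ i : Fin N, Fin (m i) → ℝ => lqrTraj A B 0 0 u i :=
    lqrTraj_continuous A B 0 0
  refine (continuous_finset_sum _ fun i _ => ?_).add ?_
  · exact ((continuous_const.mul (lqr_continuous_dot (ht _)
        (lqr_continuous_mulVec _ (ht _)))).add
      (continuous_const.mul (lqr_continuous_dot (continuous_apply i)
        (lqr_continuous_mulVec _ (continuous_apply i))))).add
      (lqr_continuous_dot (ht _) (lqr_continuous_mulVec _ (continuous_apply i)))
  · exact continuous_const.mul (lqr_continuous_dot (ht _) (lqr_continuous_mulVec _ (ht _)))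

theorem lqrLam_continuous :
    Continuous (lqrLam Q M q r A B c QN qN s₀ (N := N) (n := n) (m := m)) := by
  unfold lqrLam lqrCross
  have ht : ∀ i, Continuous fun u : ∀ i : Fin N, Fin (m i) → ℝ => lqrTraj A B 0 0 u i :=
    lqrTraj_continuous A B 0 0
  refine (((continuous_finset_sum _ fun i _ => ?_).add ?_).add ?_).add ?_
  · exact ((((continuous_const.mul (lqr_continuous_dot (ht _)
        (lqr_continuous_mulVec _ continuous_const))).add
      (continuous_const.mul (lqr_continuous_dot continuous_const
        (lqr_continuous_mulVec _ (ht _))))).add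
      (lqr_continuous_dot continuous_const (lqr_continuous_mulVec _ (continuous_apply i)))).add
      (lqr_continuous_dot continuous_const (ht _))).add
      (lqr_continuous_dot continuous_const (continuous_apply i))
  · exact continuous_const.mul (lqr_continuous_dot (ht _)
      (lqr_continuous_mulVec _ continuous_const))
  · exact continuous_const.mul (lqr_continuous_dot continuous_const
      (lqr_continuous_mulVec _ (ht _)))
  · exact lqr_continuous_dot continuous_const (ht _)

theorem lqrPhi_pos (hR : ∀ i : Fin N, (R i).PosDef)
    (hQR : ∀ i : Fin N, (Matrix.fromBlocks (Q i) (M i) (M i)ᵀ (R i)).PosSemidef)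
    (hQN : QN.PosSemidef) (u : ∀ i : Fin N, Fin (m i) → ℝ) (hu : u ≠ 0) :
    0 < lqrPhi Q R M A B QN u := by
  set z : ∀ i : Fin (N + 1), Fin (n i) → ℝ := lqrTraj A B 0 0 u with hzdef
  have hstage : ∀ i : Fin N,
      0 ≤ (1 / 2) * (z i.castSucc ⬝ᵥ (Q i).mulVec (z i.castSucc))
        + (1 / 2) * (u i ⬝ᵥ (R i).mulVec (u i))
        + z i.castSucc ⬝ᵥ (M i).mulVec (u i) := fun i => lqr_stage_nonneg (hQR i) _ _
  have hterm : 0 ≤ (1 / 2) * (z (Fin.last N) ⬝ᵥ QN.mulVec (z (Fin.last N))) := by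
    have := hQN.dotProduct_mulVec_nonneg (z (Fin.last N))
    rw [star_trivial] at this
    linarith
  have hsum : 0 ≤ ∑ i : Fin N,
      ((1 / 2) * (z i.castSucc ⬝ᵥ (Q i).mulVec (z i.castSucc))
        + (1 / 2) * (u i ⬝ᵥ (R i).mulVec (u i))
        + z i.castSucc ⬝ᵥ (M i).mulVec (u i)) :=
    Finset.sum_nonneg fun i _ => hstage i
  have hPhidef : lqrPhi Q R M A B QN u = (∑ i : Fin N,
      ((1 / 2) * (z i.castSucc ⬝ᵥ (Q i).mulVec (z i.castSucc))
        + (1 / 2) * (u i ⬝ᵥ (R i).mulVec (u i))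
        + z i.castSucc ⬝ᵥ (M i).mulVec (u i)))
      + (1 / 2) * (z (Fin.last N) ⬝ᵥ QN.mulVec (z (Fin.last N))) := rfl
  rcases lt_or_eq_of_le (add_nonneg hsum hterm) with h | h
  · rw [hPhidef]; exact h
  · exfalso
    have hsz : (∑ i : Fin N,
        ((1 / 2) * (z i.castSucc ⬝ᵥ (Q i).mulVec (z i.castSucc))
          + (1 / 2) * (u i ⬝ᵥ (R i).mulVec (u i))
          + z i.castSucc ⬝ᵥ (M i).mulVec (u i))) = 0 := by linarith
    have heach := (Finset.sum_eq_zero_iff_of_nonneg (fun i _ => hstage i)).1 hsz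
    have key : ∀ i : Fin N, z i.castSucc = 0 → u i = 0 := by
      intro i hzi
      by_contra hne
      have hpos := (hR i).dotProduct_mulVec_pos hne
      rw [star_trivial] at hpos
      have h0 := heach i (Finset.mem_univ i)
      rw [hzi] at h0
      simp only [zero_dotProduct, mul_zero, zero_add, add_zero] at h0
      linarith
    have hzall : ∀ i : Fin (N + 1), z i = 0 := by
      intro i
      induction i using Fin.induction with
      | zero => rfl
      | succ i ih =>
        have hui := key i ih
        rw [hzdef, lqrTraj_succ, ← hzdef, ih, hui]
        simp
    exact hu (funext fun i => key i (hzall i.castSucc))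

end LQRAux2

/-- Under the standard LQR regularity conditions (each `R i` positive definite and
each `fromBlocks (Q i) (M i) (M i)ᵀ (R i)` positive semidefinite, with positive
semidefinite terminal cost), the unconstrained discrete-time LQR problem attains
a minimum over the feasible set determined by the dynamics and the initial state. -/
theorem lqr_attains_minimum (N : ℕ) (n : Fin (N + 1) → ℕ) (m : Fin N → ℕ)
    (Q : ∀ i : Fin N, Matrix (Fin (n i.castSucc)) (Fin (n i.castSucc)) ℝ)
    (R : ∀ i : Fin N, Matrix (Fin (m i)) (Fin (m i)) ℝ)
    (M : ∀ i : Fin N, Matrix (Fin (n i.castSucc)) (Fin (m i)) ℝ)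
    (q : ∀ i : Fin N, Fin (n i.castSucc) → ℝ)
    (r : ∀ i : Fin N, Fin (m i) → ℝ)
    (A : ∀ i : Fin N, Matrix (Fin (n i.succ)) (Fin (n i.castSucc)) ℝ)
    (B : ∀ i : Fin N, Matrix (Fin (n i.succ)) (Fin (m i)) ℝ)
    (c : ∀ i : Fin N, Fin (n i.succ) → ℝ)
    (QN : Matrix (Fin (n (Fin.last N))) (Fin (n (Fin.last N))) ℝ)
    (qN : Fin (n (Fin.last N)) → ℝ)
    (s₀ : Fin (n 0) → ℝ)
    (hR : ∀ i : Fin N, (R i).PosDef)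
    (hQR : ∀ i : Fin N, (Matrix.fromBlocks (Q i) (M i) (M i)ᵀ (R i)).PosSemidef)
    (hQN : QN.PosSemidef) :
    ∃ (x : ∀ i : Fin (N + 1), Fin (n i) → ℝ) (u : ∀ i : Fin N, Fin (m i) → ℝ),
      LQRFeasible N n m A B c s₀ x u ∧
        ∀ (x' : ∀ i : Fin (N + 1), Fin (n i) → ℝ) (u' : ∀ i : Fin N, Fin (m i) → ℝ),
          LQRFeasible N n m A B c s₀ x' u' →
            LQRCost N n m Q R M q r QN qN x u ≤ LQRCost N n m Q R M q r QN qN x' u' := by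
  classical
  obtain ⟨ε, hε, hPhi⟩ := lqr_quad_lower (lqrPhi_continuous Q R M A B QN)
    (lqrPhi_hom Q R M A B QN) (lqrPhi_pos Q R M A B QN hR hQR hQN)
  obtain ⟨K, hK⟩ := lqr_lin_upper (g := fun u => -(lqrLam Q M q r A B c QN qN s₀ u))
    (lqrLam_continuous Q M q r A B c QN qN s₀).neg
    (fun a ha u => by rw [lqrLam_hom Q M q r A B c QN qN s₀ a ha u]; ring)
  set R₀ : ℝ := max (K / ε) 0 with hR₀
  have hcoer : ∀ u : ∀ i : Fin N, Fin (m i) → ℝ, R₀ ≤ ‖u‖ →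
      lqrF Q R M q r A B c QN qN s₀ 0 ≤ lqrF Q R M q r A B c QN qN s₀ u := by
    intro u hu
    have h1 := hPhi u
    have h2 := hK u
    have hKε : K ≤ ε * ‖u‖ := by
      have hdiv : K / ε ≤ ‖u‖ := le_trans (le_max_left _ _) hu
      calc K = ε * (K / ε) := by field_simp
        _ ≤ ε * ‖u‖ := mul_le_mul_of_nonneg_left hdiv hε.le
    have hnn : (0 : ℝ) ≤ ‖u‖ * (ε * ‖u‖ - K) :=
      mul_nonneg (norm_nonneg u) (sub_nonneg.2 hKε)
    rw [lqrF_decomp Q R M q r A B c QN qN s₀ u]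
    nlinarith [h1, h2, hnn]
  have hev : ∀ᶠ u in Filter.cocompact (∀ i : Fin N, Fin (m i) → ℝ),
      lqrF Q R M q r A B c QN qN s₀ 0 ≤ lqrF Q R M q r A B c QN qN s₀ u := by
    rw [Filter.eventually_iff, Filter.mem_cocompact']
    refine ⟨Metric.closedBall 0 R₀, isCompact_closedBall _ _, fun u hu => ?_⟩
    rw [Metric.mem_closedBall, dist_zero_right]
    by_contra hball
    exact hu (hcoer u (le_of_lt (lt_of_not_ge hball)))
  obtain ⟨ustar, hmin⟩ :=
    (lqrF_continuous Q R M q r A B c QN qN s₀).exists_forall_le' 0 hev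
  refine ⟨lqrTraj A B c s₀ ustar, ustar,
    (lqrFeasible_iff A B c s₀ _ ustar).2 rfl, ?_⟩
  intro x' u' hfeas
  have hx' : x' = lqrTraj A B c s₀ u' := (lqrFeasible_iff A B c s₀ x' u').1 hfeas
  rw [hx']
  exact hmin u'
end
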